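/- Let M = (m_{ij})_{i,j∈[d]} be an irreducible nonnegative d×d matrix with spectral radius 1 (so there exist positive left and right 1-eigenvectors a and b with ⟨a,1⟩ = ⟨a,b⟩ = 1), and suppose m_{dd} < 1. Define the (d−1)×(d−1) matrix M̃ by m̃_{jk} = m_{jk} + m_{jd}m_{dk}/(1−m_{dd}) for j,k ∈ [d−1]. Then the vectors ã = (a₁,…,a_{d−1})/(1−a_d) and b̃ = (1−a_d)/(1−a_d b_d) · (b₁,…,b_{d−1}) are left and right 1-eigenvectors of M̃ satisfying ⟨ã, 1⟩ = ⟨ã, b̃⟩ = 1. -/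

import Mathlib

open Matrix Finset

/-- Removing type `d` from a critical irreducible mean matrix `M` (with `m_{dd} < 1`)
produces the matrix `M̃` with entries `m̃_{jk} = m_{jk} + m_{jd} m_{dk}/(1−m_{dd})`,
whose left and right `1`-eigenvectors, normalized as `⟨ã,1⟩ = ⟨ã,b̃⟩ = 1`, are
`ã = (a₁,…,a_{d−1})/(1−a_d)` and `b̃ = (1−a_d)/(1−a_d b_d)·(b₁,…,b_{d−1})`. -/
theorem type_removal_eigenvectors (n : ℕ) (hn : 1 ≤ n)
    (M : Matrix (Fin (n + 1)) (Fin (n + 1)) ℝ)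
    (hM : ∀ i j, 0 ≤ M i j)
    (hirr : ∀ i j, ∃ k : ℕ, 0 < (M ^ k) i j)
    (a b : Fin (n + 1) → ℝ) (ha : ∀ i, 0 < a i) (hb : ∀ i, 0 < b i)
    (haM : Matrix.vecMul a M = a) (hMb : M.mulVec b = b)
    (ha1 : ∑ i, a i = 1) (hab : ∑ i, a i * b i = 1)
    (hmdd : M (Fin.last n) (Fin.last n) < 1) :
    let d := Fin.last n
    let Mt : Matrix (Fin n) (Fin n) ℝ := fun j k =>
      M j.castSucc k.castSucc + M j.castSucc d * M d k.castSucc / (1 - M d d)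
    let at' : Fin n → ℝ := fun k => a k.castSucc / (1 - a d)
    let bt : Fin n → ℝ := fun k => (1 - a d) / (1 - a d * b d) * b k.castSucc
    Matrix.vecMul at' Mt = at' ∧ Mt.mulVec bt = bt ∧
      (∑ k, at' k = 1) ∧ (∑ k, at' k * bt k = 1) := by
  intro d Mt at' bt
  have hsum : ∀ f : Fin (n+1) → ℝ, ∑ i, f i = ∑ j : Fin n, f j.castSucc + f d :=
    fun f => Fin.sum_univ_castSucc f
  have hd1 : (1 : ℝ) - M d d ≠ 0 := by simp only [d] at *; linarith
  have i0 : Fin n := ⟨0, hn⟩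
  have hadlt : a d < 1 := by
    have h1 := hsum a
    have hpos : 0 < ∑ j : Fin n, a j.castSucc :=
      Finset.sum_pos (fun j _ => ha _) ⟨i0, Finset.mem_univ _⟩
    linarith [ha1.symm.trans h1]
  have had : (1 : ℝ) - a d ≠ 0 := by linarith
  have habd : a d * b d < 1 := by
    have h1 := hsum (fun i => a i * b i)
    have hpos : 0 < ∑ j : Fin n, a j.castSucc * b j.castSucc :=
      Finset.sum_pos (fun j _ => mul_pos (ha _) (hb _)) ⟨i0, Finset.mem_univ _⟩
    linarith [hab.symm.trans h1]
  have habd' : (1 : ℝ) - a d * b d ≠ 0 := by linarith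
  have haMk : ∀ k, ∑ j : Fin n, a j.castSucc * M j.castSucc k = a k - a d * M d k := by
    intro k
    have h := congrFun haM k
    simp only [Matrix.vecMul, dotProduct] at h
    rw [hsum (fun i => a i * M i k)] at h
    linarith
  have hMbj : ∀ j, ∑ k : Fin n, M j k.castSucc * b k.castSucc = b j - M j d * b d := by
    intro j
    have h := congrFun hMb j
    simp only [Matrix.mulVec, dotProduct] at h
    rw [hsum (fun k => M j k * b k)] at h
    linarith
  have haMd : ∑ j : Fin n, a j.castSucc * M j.castSucc d = a d * (1 - M d d) := by
    have h := haMk d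
    rw [h]; ring
  have hMbd : ∑ k : Fin n, M d k.castSucc * b k.castSucc = b d * (1 - M d d) := by
    have h := hMbj d
    rw [h]; ring
  refine ⟨?_, ?_, ?_, ?_⟩
  · funext k
    show ∑ j, at' j * Mt j k = at' k
    have step : ∀ j : Fin n, at' j * Mt j k =
        (a j.castSucc * M j.castSucc k.castSucc) / (1 - a d)
          + (a j.castSucc * M j.castSucc d) * (M d k.castSucc / (1 - M d d)) / (1 - a d) := by
      intro j; simp only [at', Mt]; ring
    rw [Finset.sum_congr rfl (fun j _ => step j), Finset.sum_add_distrib,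
      ← Finset.sum_div, ← Finset.sum_div, ← Finset.sum_mul, haMk, haMd]
    show _ = a k.castSucc / (1 - a d)
    field_simp
    ring
  · funext j
    show ∑ k, Mt j k * bt k = bt j
    have step : ∀ k : Fin n, Mt j k * bt k =
        (1 - a d) / (1 - a d * b d) * ((M j.castSucc k.castSucc * b k.castSucc)
          + (M j.castSucc d / (1 - M d d)) * (M d k.castSucc * b k.castSucc)) := by
      intro k; simp only [Mt, bt]; ring
    rw [Finset.sum_congr rfl (fun k _ => step k), ← Finset.mul_sum,
      Finset.sum_add_distrib, ← Finset.mul_sum, hMbj, hMbd]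
    show _ = (1 - a d) / (1 - a d * b d) * b j.castSucc
    field_simp
    ring
  · have h1 := hsum a
    rw [ha1] at h1
    show (∑ k : Fin n, a k.castSucc / (1 - a d)) = 1
    rw [← Finset.sum_div]
    field_simp
    linarith
  · have h1 := hsum (fun i => a i * b i)
    rw [hab] at h1
    show (∑ k : Fin n, a k.castSucc / (1 - a d) * ((1 - a d) / (1 - a d * b d) * b k.castSucc)) = 1
    have step : ∀ k : Fin n, a k.castSucc / (1 - a d) * ((1 - a d) / (1 - a d * b d) * b k.castSucc)
        = (a k.castSucc * b k.castSucc) / (1 - a d * b d) := by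
      intro k; field_simp
    rw [Finset.sum_congr rfl (fun k _ => step k), ← Finset.sum_div]
    have hsab : ∑ k : Fin n, a k.castSucc * b k.castSucc = 1 - a d * b d := by linarith
    rw [hsab, div_self habd']
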